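/- Let A' ⊆ E ∪ {a, γ} and A = A' \ {a, γ}. If A' = A (i.e., a, γ ∉ A') and cl(A) contains no OX-circuit of M, then cl'(A') = cl(A). -/

import Mathlib

open Set

namespace ESSplit

variable {α : Type*}

/-- A circuit of a matroid: a minimal dependent set. -/
def IsCircuit (M : Matroid α) (C : Set α) : Prop :=
  M.Dep C ∧ ∀ D, D ⊂ C → M.Indep D

/-- A binary matroid: one representable over GF(2). -/
def IsBinary (M : Matroid α) : Prop :=
  ∃ (n : ℕ) (φ : α → (Fin n → ZMod 2)),
    ∀ I, I ⊆ M.E → (M.Indep I ↔ LinearIndependent (ZMod 2) (fun x : I => φ x.1))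

/-- An OX-circuit: a circuit meeting `X` in an odd number of elements. -/
def IsOX (M : Matroid α) (X C : Set α) : Prop :=
  IsCircuit M C ∧ Odd (C ∩ X).ncard

/-- An EX-circuit: a circuit meeting `X` in an even number of elements. -/
def IsEX (M : Matroid α) (X C : Set α) : Prop :=
  IsCircuit M C ∧ Even (C ∩ X).ncard

/-- `D` is a union of two disjoint OX-circuits containing no EX-circuit. -/
def OXUnion (M : Matroid α) (X D : Set α) : Prop :=
  ∃ C₁ C₂, IsOX M X C₁ ∧ IsOX M X C₂ ∧ Disjoint C₁ C₂ ∧ D = C₁ ∪ C₂ ∧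
    ¬ ∃ C₀, IsEX M X C₀ ∧ C₀ ⊆ D

/-- The description of the circuits of the es-splitting matroid `M_X^e`. -/
def ESCircuit (M : Matroid α) (X : Set α) (e a γ : α) (C : Set α) : Prop :=
  C = {e, a, γ} ∨
  IsEX M X C ∨
  (OXUnion M X C ∧ ∀ D, OXUnion M X D → D ⊆ C → D = C) ∨
  (∃ C₀, IsOX M X C₀ ∧ C = C₀ ∪ {a}) ∨
  (∃ C₀, IsOX M X C₀ ∧ e ∉ C₀ ∧ C = C₀ ∪ {e, γ}) ∨
  (∃ C₀, IsOX M X C₀ ∧ e ∈ C₀ ∧ C = (C₀ \ {e}) ∪ {γ}) ∨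
  (∃ C₀, IsCircuit M C₀ ∧ e ∈ C₀ ∧ Odd (((C₀ \ {e}) ∩ X).ncard) ∧
      C = (C₀ \ {e}) ∪ {a, γ})

/-- `M'` is the es-splitting matroid `M_X^e` of `M` (with new elements `a`, `γ`):
it has ground set `M.E ∪ {a, γ}` and its circuits are exactly as described. -/
def IsESSplit (M M' : Matroid α) (X : Set α) (e a γ : α) : Prop :=
  M'.E = M.E ∪ {a, γ} ∧ ∀ C, IsCircuit M' C ↔ ESCircuit M X e a γ C

/-- The set `T(A)`. -/
def T (M : Matroid α) (X : Set α) (e : α) (A : Set α) : Set α :=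
  {x | x ∈ M.E \ A ∧ x ≠ e ∧ ∃ C, IsOX M X C ∧ x ∈ C ∧ e ∈ C ∧ C ⊆ A ∪ {e, x}}

/-- The set `F(A)`. -/
def F (M : Matroid α) (X A : Set α) : Set α :=
  {x | x ∈ M.closure A \ A ∧ ∃ C, IsOX M X C ∧ x ∈ C ∧ C ⊆ M.closure A}

/-- The rank of a set `A` in a (finite) matroid: the maximum size of an
independent subset of `A`. -/
noncomputable def rk (M : Matroid α) (A : Set α) : ℕ :=
  sSup {n | ∃ I, M.Indep I ∧ I ⊆ A ∧ I.ncard = n}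

end ESSplit

open ESSplit

section Aux

open ESSplit Set

variable {α : Type*}

lemma aux_exists_circuit_subset {N : Matroid α} :
    ∀ n (D : Set α), D.Finite → D.ncard ≤ n → N.Dep D → ∃ C, C ⊆ D ∧ IsCircuit N C := by
  intro n
  induction n with
  | zero =>
    intro D hfin hcard hD
    have : D = ∅ := by
      rw [← Set.ncard_eq_zero hfin]; omega
    exact absurd (this ▸ N.empty_indep) hD.not_indep
  | succ n ih =>
    intro D hfin hcard hD
    by_cases h : ∀ D', D' ⊂ D → N.Indep D'
    · exact ⟨D, Subset.rfl, hD, h⟩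
    · push_neg at h
      obtain ⟨D', hss, hD'⟩ := h
      have hD'dep : N.Dep D' := by
        rw [Matroid.dep_iff]
        exact ⟨hD', hss.subset.trans hD.subset_ground⟩
      have hlt : D'.ncard < D.ncard := Set.ncard_lt_ncard hss hfin
      obtain ⟨C, hCsub, hC⟩ := ih D' (hfin.subset hss.subset) (by omega) hD'dep
      exact ⟨C, hCsub.trans hss.subset, hC⟩

lemma aux_mem_closure_exists_circuit {N : Matroid α} {A : Set α} {x : α}
    (hfinE : N.E.Finite) (hAE : A ⊆ N.E) (hx : x ∈ N.closure A) (hxA : x ∉ A) :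
    ∃ C, IsCircuit N C ∧ x ∈ C ∧ C ⊆ insert x A := by
  obtain ⟨I, hI⟩ := N.exists_isBasis A
  have hxI : x ∈ N.closure I := by rw [hI.closure_eq_closure]; exact hx
  have hdep : N.Dep (insert x I) :=
    hI.indep.insert_dep_iff.mpr ⟨hxI, fun h => hxA (hI.subset h)⟩
  obtain ⟨C, hCsub, hC⟩ := aux_exists_circuit_subset (insert x I).ncard (insert x I)
    (hfinE.subset hdep.subset_ground) le_rfl hdep
  have hxC : x ∈ C := by
    by_contra hxC
    have hCI : C ⊆ I := fun y hy => ((hCsub hy).resolve_left (fun h => hxC (h ▸ hy)))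
    exact hC.1.not_indep (hI.indep.subset hCI)
  exact ⟨C, hC, hxC, hCsub.trans (insert_subset_insert hI.subset)⟩

lemma aux_circuit_subset_mem_closure {N : Matroid α} {A C : Set α} {x : α}
    (hC : IsCircuit N C) (hxC : x ∈ C) (hCA : C ⊆ insert x A) : x ∈ N.closure A := by
  have hss : C \ {x} ⊂ C := Set.sdiff_singleton_ssubset.mpr hxC
  have hInd : N.Indep (C \ {x}) := hC.2 _ hss
  have hx : x ∈ N.closure (C \ {x}) := by
    rw [hInd.mem_closure_iff_of_notMem (by simp)]
    rw [Set.insert_diff_singleton, Set.insert_eq_of_mem hxC]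
    exact hC.1
  refine mem_of_mem_of_subset hx (N.closure_subset_closure ?_)
  rintro y ⟨hyC, hyx⟩
  exact (hCA hyC).resolve_left hyx

end Aux

theorem closure_eq_closure
    {α : Type*} (M M' : Matroid α) (X : Set α) (e a γ : α)
    (hfin : M.E.Finite) (hbin : IsBinary M)
    (hXE : X ⊆ M.E) (heX : e ∈ X) (haE : a ∉ M.E) (hγE : γ ∉ M.E) (haγ : a ≠ γ)
    (hsplit : IsESSplit M M' X e a γ)
    (A' A : Set α) (hA'sub : A' ⊆ M.E ∪ {a, γ}) (hA : A = A' \ {a, γ})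
    (hAA : A' = A) (hnoOX : ¬ ∃ C, IsOX M X C ∧ C ⊆ M.closure A) :
    M'.closure A' = M.closure A := by
  have hAE : A ⊆ M.E := by
    intro y hy
    rcases hA'sub (hAA ▸ hy : y ∈ A') with h | h
    · exact h
    · exact absurd h (hA ▸ hy : y ∈ A' \ {a, γ}).2
  have haA : a ∉ A := by rw [hA]; simp
  have hγA : γ ∉ A := by rw [hA]; simp
  have hME' : M'.E = M.E ∪ {a, γ} := hsplit.1
  have hfinE' : M'.E.Finite := by
    rw [hME']; exact hfin.union ((Set.finite_singleton γ).insert a)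
  have hAE' : A ⊆ M'.E := fun y hy => hME' ▸ Or.inl (hAE hy)
  have hAcl : A ⊆ M.closure A := M.subset_closure A hAE
  rw [hAA]
  ext x
  constructor
  · intro hx
    by_cases hxA : x ∈ A
    · exact hAcl hxA
    obtain ⟨C', hC', hxC', hsub⟩ := aux_mem_closure_exists_circuit hfinE' hAE' hx hxA
    have hmem : ∀ z ∈ C', z ∉ A → z = x := by
      intro z hz hza
      rcases hsub hz with h | h
      · exact h
      · exact absurd h hza
    rcases (hsplit.2 C').mp hC' with h | h | h | h | h | h | h
    · exfalso
      subst h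
      have hax : a = x := hmem a (by simp) haA
      have hγx : γ = x := hmem γ (by simp) hγA
      exact haγ (hax.trans hγx.symm)
    · exact aux_circuit_subset_mem_closure h.1 hxC' hsub
    · exfalso
      obtain ⟨⟨C₁, C₂, h1, h2, hdisj, rfl, -⟩, -⟩ := h
      by_cases hx1 : x ∈ C₁
      · have hC2A : C₂ ⊆ A := by
          intro y hy
          rcases hsub (Set.mem_union_right _ hy) with rfl | hyA
          · exact absurd hy (Set.disjoint_left.mp hdisj hx1)
          · exact hyA
        exact hnoOX ⟨C₂, h2, hC2A.trans hAcl⟩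
      · have hC1A : C₁ ⊆ A := by
          intro y hy
          rcases hsub (Set.mem_union_left _ hy) with rfl | hyA
          · exact absurd hy hx1
          · exact hyA
        exact hnoOX ⟨C₁, h1, hC1A.trans hAcl⟩
    · exfalso
      obtain ⟨C₀, hOX, rfl⟩ := h
      obtain rfl : a = x := hmem a (by simp) haA
      have hC0A : C₀ ⊆ A := by
        intro y hy
        rcases hsub (Set.mem_union_left _ hy) with rfl | hyA
        · exact absurd (hOX.1.1.subset_ground hy) haE
        · exact hyA
      exact hnoOX ⟨C₀, hOX, hC0A.trans hAcl⟩
    · exfalso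
      obtain ⟨C₀, hOX, -, rfl⟩ := h
      obtain rfl : γ = x := hmem γ (by simp) hγA
      have hC0A : C₀ ⊆ A := by
        intro y hy
        rcases hsub (Set.mem_union_left _ hy) with rfl | hyA
        · exact absurd (hOX.1.1.subset_ground hy) hγE
        · exact hyA
      exact hnoOX ⟨C₀, hOX, hC0A.trans hAcl⟩
    · exfalso
      obtain ⟨C₀, hOX, heC, rfl⟩ := h
      obtain rfl : γ = x := hmem γ (by simp) hγA
      have hC0A : C₀ \ {e} ⊆ A := by
        intro y hy
        rcases hsub (Set.mem_union_left _ hy) with rfl | hyA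
        · exact absurd (hOX.1.1.subset_ground hy.1) hγE
        · exact hyA
      have hecl : e ∈ M.closure A := by
        refine mem_of_mem_of_subset
          (aux_circuit_subset_mem_closure hOX.1 heC ?_) (M.closure_subset_closure hC0A)
        intro y hy
        by_cases hye : y = e
        · exact Or.inl hye
        · exact Or.inr ⟨hy, hye⟩
      refine hnoOX ⟨C₀, hOX, fun y hy => ?_⟩
      by_cases hye : y = e
      · exact hye ▸ hecl
      · exact hAcl (hC0A ⟨hy, hye⟩)
    · exfalso
      obtain ⟨C₀, -, -, -, rfl⟩ := h
      have hax : a = x := hmem a (by simp) haA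
      have hγx : γ = x := hmem γ (by simp) hγA
      exact haγ (hax.trans hγx.symm)
  · intro hx
    by_cases hxA : x ∈ A
    · exact M'.subset_closure A hAE' hxA
    obtain ⟨C, hC, hxC, hsub⟩ := aux_mem_closure_exists_circuit hfin hAE hx hxA
    have hCcl : C ⊆ M.closure A := hsub.trans (Set.insert_subset hx hAcl)
    have hEX : IsEX M X C := by
      refine ⟨hC, (Nat.even_or_odd _).resolve_right fun hodd => ?_⟩
      exact hnoOX ⟨C, ⟨hC, hodd⟩, hCcl⟩
    exact aux_circuit_subset_mem_closure ((hsplit.2 C).mpr (Or.inr (Or.inl hEX))) hxC hsub
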